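/- For f(x) = (1 + xⁿ)/(K + xⁿ) with K > 1 and n > 1, the system of tangency conditions x/κ_d = f(x) and 1/(κ_d n(K−1)) = x^{n−1}/(K + xⁿ)² has real positive solutions x± given by x± = ((K−1)/2 · [ (n − (K+1)/(K−1)) ± √(n² − 2n(K+1)/(K−1) + 1) ])^{1/n}, provided the discriminant n² − 2n(K+1)/(K−1) + 1 is nonnegative. -/

import Mathlib

private lemma aux_tangency (K : ℝ) (n : ℕ) (hK : 1 < K) (hn : 1 < n)
    (y : ℝ) (hy : 0 < y)
    (hquad : (1 + y) * (K + y) = n * (K - 1) * y)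
    (f : ℝ → ℝ) (hf : ∀ x, f x = (1 + x ^ n) / (K + x ^ n))
    (x : ℝ) (hx : x = y ^ ((1 : ℝ) / n)) :
    0 < x ∧ ∃ κd > 0, x / κd = f x ∧
        1 / (κd * n * (K - 1)) = x ^ (n - 1) / (K + x ^ n) ^ 2 := by
  have hn0 : (n : ℝ) ≠ 0 := by positivity
  have hxpos : 0 < x := by rw [hx]; exact Real.rpow_pos_of_pos hy _
  have hxn : x ^ n = y := by
    rw [hx, ← Real.rpow_natCast (y ^ ((1:ℝ)/n)) n, ← Real.rpow_mul hy.le]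
    rw [one_div_mul_cancel hn0, Real.rpow_one]
  have h1y : (0:ℝ) < 1 + y := by linarith
  have hKy : (0:ℝ) < K + y := by linarith
  have hK1' : (K - 1 : ℝ) ≠ 0 := by intro h; nlinarith
  refine ⟨hxpos, x * (K + y) / (1 + y), by positivity, ?_, ?_⟩
  · rw [hf, hxn]
    field_simp
  · have hxn1 : x ^ (n - 1) = y / x := by
      have h : x ^ (n - 1) * x = y := by
        rw [← pow_succ, Nat.sub_add_cancel (le_of_lt hn), hxn]
      field_simp at h ⊢
      linarith [h]
    have hx0 : x ≠ 0 := ne_of_gt hxpos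
    have h1y' : (1 + y) ≠ 0 := ne_of_gt h1y
    have hKy' : (K + y) ≠ 0 := ne_of_gt hKy
    rw [hxn1, hxn]
    field_simp
    linear_combination hquad

theorem inducible_tangency_points
    (K : ℝ) (n : ℕ) (hK : 1 < K) (hn : 1 < n)
    (hdisc : 0 ≤ (n : ℝ) ^ 2 - 2 * n * (K + 1) / (K - 1) + 1)
    (f : ℝ → ℝ) (hf : ∀ x, f x = (1 + x ^ n) / (K + x ^ n))
    (xp xm : ℝ)
    (hxp : xp = ((K - 1) / 2 * (((n : ℝ) - (K + 1) / (K - 1)) +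
        Real.sqrt ((n : ℝ) ^ 2 - 2 * n * (K + 1) / (K - 1) + 1))) ^ ((1 : ℝ) / n))
    (hxm : xm = ((K - 1) / 2 * (((n : ℝ) - (K + 1) / (K - 1)) -
        Real.sqrt ((n : ℝ) ^ 2 - 2 * n * (K + 1) / (K - 1) + 1))) ^ ((1 : ℝ) / n)) :
    (0 < xp ∧ ∃ κd > 0, xp / κd = f xp ∧
        1 / (κd * n * (K - 1)) = xp ^ (n - 1) / (K + xp ^ n) ^ 2) ∧
    (0 < xm ∧ ∃ κd > 0, xm / κd = f xm ∧
        1 / (κd * n * (K - 1)) = xm ^ (n - 1) / (K + xm ^ n) ^ 2) := by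
  have hK1 : (0:ℝ) < K - 1 := by linarith
  have hK1' : (K - 1 : ℝ) ≠ 0 := ne_of_gt hK1
  set s := Real.sqrt ((n : ℝ) ^ 2 - 2 * n * (K + 1) / (K - 1) + 1) with hs_def
  have hs0 : 0 ≤ s := Real.sqrt_nonneg _
  have hs2 : (K - 1) * s ^ 2 = (n:ℝ)^2 * (K-1) - 2*n*(K+1) + (K-1) := by
    rw [hs_def, Real.sq_sqrt hdisc]; field_simp
  have hn2 : (2:ℝ) ≤ n := by exact_mod_cast hn
  have hb : 0 < (n:ℝ) * (K - 1) - (K + 1) := by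
    by_contra h
    push_neg at h
    have hd : (n:ℝ) * (K - 1) ≤ K + 1 := by linarith
    have hd2 : 2 * (n:ℝ) * ((n:ℝ) * (K - 1)) ≤ 2 * n * (K + 1) := by nlinarith
    have hdisc2 : 0 ≤ (K - 1) * ((n : ℝ) ^ 2 - 2 * n * (K + 1) / (K - 1) + 1) :=
      mul_nonneg hK1.le hdisc
    have hre : (K - 1) * ((n : ℝ) ^ 2 - 2 * n * (K + 1) / (K - 1) + 1)
        = (n:ℝ)^2 * (K - 1) - 2 * n * (K + 1) + (K - 1) := by field_simp
    rw [hre] at hdisc2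
    nlinarith
  have hs' : ((K - 1) * s) ^ 2 = ((n:ℝ) * (K - 1) - (K + 1)) ^ 2 - 4 * K := by
    linear_combination (K - 1) * hs2
  have hyp_eq : (K - 1) / 2 * (((n : ℝ) - (K + 1) / (K - 1)) + s)
      = (((n:ℝ) * (K - 1) - (K + 1)) + (K - 1) * s) / 2 := by
    field_simp
  have hym_eq : (K - 1) / 2 * (((n : ℝ) - (K + 1) / (K - 1)) - s)
      = (((n:ℝ) * (K - 1) - (K + 1)) - (K - 1) * s) / 2 := by
    field_simp
  have hKs : 0 ≤ (K - 1) * s := mul_nonneg hK1.le hs0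
  have hsmall : (K - 1) * s < (n:ℝ) * (K - 1) - (K + 1) := by
    nlinarith [hs', hb, hK, hKs]
  constructor
  · apply aux_tangency K n hK hn _ (by rw [hyp_eq]; nlinarith) ?_ f hf xp hxp
    rw [hyp_eq]
    linear_combination ((1:ℝ)/4) * hs'
  · apply aux_tangency K n hK hn _ (by rw [hym_eq]; nlinarith) ?_ f hf xm hxm
    rw [hym_eq]
    linear_combination ((1:ℝ)/4) * hs'
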